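/- There exist c > 0 and K ∈ ℕ (depending on β, m, δ) such that the following holds. Let τ₁, τ₂, τ₃ ∈ ℝ and k₁, k₂, k₃ ∈ ℤ \ {0} satisfy τ₁ + τ₂ + τ₃ = 0, k₁ + k₂ + k₃ = 0 and max{|k₁|, |k₂|, |k₃|} ≥ K. Set M_j := ⟨(τ_j - λ_{k_j})/⟨k_j⟩^δ⟩, N_max := max_j ⟨k_j⟩, N_min := min_j ⟨k_j⟩. Suppose the maximum of (M₁, M₂, M₃) is attained at an index j₀ at which the minimum of (⟨k₁⟩, ⟨k₂⟩, ⟨k₃⟩) is also attained, and that M_j ≤ M_{j₀}·(N_min/N_max)^δ for both indices j ≠ j₀. Then M_{j₀} ≥ c · N_max^{2m} · N_min^{1-δ}. -/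

import Mathlib

/-- The Japanese bracket `⟨x⟩ = (1 + |x|²)^{1/2}`. -/
noncomputable def jbr (x : ℝ) : ℝ := Real.sqrt (1 + x ^ 2)

/-- The modulation weight `M = ⟨(τ - λ_k)/⟨k⟩^δ⟩`. -/
noncomputable def modw (lam : ℤ → ℝ) (δ : ℝ) (k : ℤ) (τ : ℝ) : ℝ :=
  jbr ((τ - lam k) / jbr (k : ℝ) ^ δ)

noncomputable def PhiR (p x y : ℝ) : ℝ := (x+y)^(1+p) - x^(1+p) - y^(1+p)
noncomputable def FR (p x : ℝ) : ℝ := x * |x| ^ p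

lemma jbr_pos (x : ℝ) : 0 < jbr x := Real.sqrt_pos.mpr (by positivity)

lemma abs_le_jbr (x : ℝ) : |x| ≤ jbr x := by
  rw [← Real.sqrt_sq_eq_abs]; exact Real.sqrt_le_sqrt (by nlinarith)

lemma jbr_le_sqrt2 {x : ℝ} (hx : 1 ≤ |x|) : jbr x ≤ Real.sqrt 2 * |x| := by
  rw [← Real.sqrt_sq_eq_abs, ← Real.sqrt_mul (by norm_num)]
  apply Real.sqrt_le_sqrt
  nlinarith [abs_nonneg x, sq_abs x]

lemma modw_ge (lam : ℤ → ℝ) {δ : ℝ} (k : ℤ) (τ : ℝ) :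
    |τ - lam k| ≤ modw lam δ k τ * jbr (k : ℝ) ^ δ := by
  unfold modw
  have h1 : (0:ℝ) < jbr (k:ℝ) ^ δ := Real.rpow_pos_of_pos (jbr_pos _) δ
  have h2 := abs_le_jbr ((τ - lam k) / jbr (k:ℝ) ^ δ)
  rw [abs_div, abs_of_pos h1] at h2
  calc |τ - lam k| = |τ - lam k| / (jbr (k:ℝ) ^ δ) * (jbr (k:ℝ) ^ δ) := by field_simp
    _ ≤ _ := mul_le_mul_of_nonneg_right h2 h1.le

lemma modw_nonneg (lam : ℤ → ℝ) (δ : ℝ) (k : ℤ) (τ : ℝ) : 0 ≤ modw lam δ k τ :=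
  Real.sqrt_nonneg _

lemma exists_K (C e : ℝ) (hC : 0 < C) (he : 0 < e) :
    ∃ K : ℕ, 1 ≤ K ∧ ∀ t : ℝ, (K:ℝ) ≤ t → C ≤ t ^ e := by
  obtain ⟨n, hn⟩ := exists_nat_ge (C ^ (1/e))
  refine ⟨n+1, by omega, ?_⟩
  intro t ht
  have h0 : C ^ (1/e) ≤ t := by
    refine le_trans (le_trans hn ?_) ht
    push_cast; linarith
  have h1 : (C^(1/e))^e ≤ t^e :=
    Real.rpow_le_rpow (Real.rpow_nonneg hC.le _) h0 he.le
  rwa [← Real.rpow_mul hC.le, one_div, inv_mul_cancel₀ he.ne', Real.rpow_one] at h1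

lemma Phi_lower {p : ℝ} (hp : 0 ≤ p) {x y : ℝ} (hy : 0 < y) (hxy : y ≤ x) :
    p * x ^ p * y ≤ PhiR p x y := by
  have hx : 0 < x := lt_of_lt_of_le hy hxy
  have h1 : x^(1+p) + (1+p) * x^p * y ≤ (x+y)^(1+p) := by
    have hb : 1 + (1+p) * (y/x) ≤ (1 + y/x)^(1+p) :=
      one_add_mul_self_le_rpow_one_add (le_trans (by norm_num) (by positivity : (0:ℝ) ≤ y/x))
        (by linarith)
    have hxy' : x + y = x * (1 + y/x) := by field_simp
    rw [hxy', Real.mul_rpow hx.le (by positivity)]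
    have h2 : x^(1+p) * (1 + (1+p)*(y/x)) ≤ x^(1+p) * (1 + y/x)^(1+p) :=
      mul_le_mul_of_nonneg_left hb (by positivity)
    have h4 : x^(1+p)/x = x^p := by
      rw [Real.rpow_add hx, Real.rpow_one]; field_simp
    have h3 : x^(1+p) * (1 + (1+p)*(y/x)) = x^(1+p) + (1+p) * x^p * y := by
      rw [← h4]; field_simp
    rw [h3] at h2; exact h2
  have h5 : y^(1+p) ≤ y * x^p := by
    rw [Real.rpow_add hy, Real.rpow_one]
    exact mul_le_mul_of_nonneg_left (Real.rpow_le_rpow hy.le hxy hp) hy.le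
  unfold PhiR; nlinarith

lemma Phi_upper {p : ℝ} (hp : 0 ≤ p) {x y : ℝ} (hy : 0 < y) (hxy : y ≤ x) :
    PhiR p x y ≤ (1+p) * (x+y)^p * y := by
  have hx : 0 < x := lt_of_lt_of_le hy hxy
  have hs : 0 < x + y := by linarith
  have hds : y/(x+y) ≤ 1 := by rw [div_le_one hs]; linarith
  have hds0 : 0 ≤ y/(x+y) := by positivity
  have h1 : (x+y)^(1+p) - (1+p) * (x+y)^p * y ≤ x^(1+p) := by
    have hb : 1 + (1+p) * (-(y/(x+y))) ≤ (1 + -(y/(x+y)))^(1+p) :=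
      one_add_mul_self_le_rpow_one_add (by linarith) (by linarith)
    have h2 : (x+y)^(1+p) * (1 + (1+p)*(-(y/(x+y)))) ≤ (x+y)^(1+p) * (1 + -(y/(x+y)))^(1+p) :=
      mul_le_mul_of_nonneg_left hb (by positivity)
    have h4 : (x+y)^(1+p)/(x+y) = (x+y)^p := by
      rw [Real.rpow_add hs, Real.rpow_one]; field_simp
    have h3 : (x+y)^(1+p) * (1 + (1+p)*(-(y/(x+y)))) = (x+y)^(1+p) - (1+p) * (x+y)^p * y := by
      rw [← h4]; field_simp; ring
    have h6 : (x+y)^(1+p) * (1 + -(y/(x+y)))^(1+p) = x^(1+p) := by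
      rw [← Real.mul_rpow hs.le (by linarith)]
      congr 1; field_simp; ring
    rw [h3, h6] at h2; exact h2
  have h5 : 0 ≤ y^(1+p) := Real.rpow_nonneg hy.le _
  unfold PhiR; linarith

lemma FR_nonneg_eq {p x : ℝ} (hx : 0 < x) : FR p x = x ^ (1+p) := by
  unfold FR
  rw [abs_of_pos hx, Real.rpow_add hx, Real.rpow_one]

lemma FR_neg (p x : ℝ) : FR p (-x) = - FR p x := by
  unfold FR; rw [abs_neg]; ring

lemma struct_two_pos (a b c : ℤ) (ha : 0 < a) (hb : 0 < b) (hs : a + b + c = 0) :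
    ∃ x y : ℤ, 1 ≤ y ∧ y ≤ x ∧ x + y = max |a| (max |b| |c|) ∧
      y = min |a| (min |b| |c|) ∧
      ∀ p : ℝ, FR p a + FR p b + FR p c = -(PhiR p x y) := by
  have h1 : |a| = a := abs_of_pos ha
  have h2 : |b| = b := abs_of_pos hb
  have h3 : |c| = a + b := by
    rw [show c = -(a+b) by omega, abs_neg, abs_of_pos (by omega)]
  refine ⟨max a b, min a b, by omega, by omega, by omega, by omega, ?_⟩
  intro p
  have hc' : ((c:ℤ):ℝ) = -(((a:ℤ):ℝ) + ((b:ℤ):ℝ)) := by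
    rw [show c = -(a+b) by omega]; push_cast; ring
  have hsum : 0 < (a:ℝ) + (b:ℝ) := by
    have h4 : (0:ℝ) < (a:ℝ) := by exact_mod_cast ha
    have h5 : (0:ℝ) < (b:ℝ) := by exact_mod_cast hb
    linarith
  rw [hc', FR_neg, FR_nonneg_eq (by exact_mod_cast ha : (0:ℝ) < (a:ℝ))
    (p := p), FR_nonneg_eq (by exact_mod_cast hb : (0:ℝ) < (b:ℝ)), FR_nonneg_eq hsum]
  rcases le_total b a with h | h
  · rw [max_eq_left h, min_eq_right h]
    unfold PhiR; push_cast; ring_nf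
  · rw [max_eq_right h, min_eq_left h]
    unfold PhiR; push_cast; ring_nf

lemma struct (a b c : ℤ) (ha : a ≠ 0) (hb : b ≠ 0) (hc : c ≠ 0) (hs : a + b + c = 0) :
    ∃ x y : ℤ, 1 ≤ y ∧ y ≤ x ∧ x + y = max |a| (max |b| |c|) ∧
      y = min |a| (min |b| |c|) ∧
      ∃ ε : ℝ, (ε = 1 ∨ ε = -1) ∧
      ∀ p : ℝ, FR p a + FR p b + FR p c = ε * PhiR p x y := by
  rcases ha.lt_or_gt with ha' | ha' <;> rcases hb.lt_or_gt with hb' | hb' <;>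
    rcases hc.lt_or_gt with hc' | hc'
  · omega
  · obtain ⟨x, y, h1, h2, h3, h4, h5⟩ :=
      struct_two_pos (-a) (-b) (-c) (by omega) (by omega) (by omega)
    simp only [abs_neg] at h3 h4
    refine ⟨x, y, h1, h2, by omega, by omega, 1, Or.inl rfl, ?_⟩
    intro p
    have h6 := h5 p
    push_cast at h6
    rw [FR_neg, FR_neg, FR_neg] at h6
    linarith [h6]
  · obtain ⟨x, y, h1, h2, h3, h4, h5⟩ :=
      struct_two_pos (-a) (-c) (-b) (by omega) (by omega) (by omega)
    simp only [abs_neg] at h3 h4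
    refine ⟨x, y, h1, h2, by omega, by omega, 1, Or.inl rfl, ?_⟩
    intro p
    have h6 := h5 p
    push_cast at h6
    rw [FR_neg, FR_neg, FR_neg] at h6
    linarith [h6]
  · obtain ⟨x, y, h1, h2, h3, h4, h5⟩ := struct_two_pos b c a hb' hc' (by omega)
    refine ⟨x, y, h1, h2, by omega, by omega, -1, Or.inr rfl, ?_⟩
    intro p
    linarith [h5 p]
  · obtain ⟨x, y, h1, h2, h3, h4, h5⟩ :=
      struct_two_pos (-b) (-c) (-a) (by omega) (by omega) (by omega)
    simp only [abs_neg] at h3 h4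
    refine ⟨x, y, h1, h2, by omega, by omega, 1, Or.inl rfl, ?_⟩
    intro p
    have h6 := h5 p
    push_cast at h6
    rw [FR_neg, FR_neg, FR_neg] at h6
    linarith [h6]
  · obtain ⟨x, y, h1, h2, h3, h4, h5⟩ := struct_two_pos a c b ha' hc' (by omega)
    refine ⟨x, y, h1, h2, by omega, by omega, -1, Or.inr rfl, ?_⟩
    intro p
    linarith [h5 p]
  · obtain ⟨x, y, h1, h2, h3, h4, h5⟩ := struct_two_pos a b c ha' hb' hs
    refine ⟨x, y, h1, h2, by omega, by omega, -1, Or.inr rfl, ?_⟩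
    intro p
    linarith [h5 p]
  · omega

/-- if the maximal modulation is attained at the index `j₀` of the minimal
frequency, and the other two modulations are `≤ M_{j₀} (N_min/N_max)^δ`, then
`M_{j₀} ≥ c N_max^{2m} N_min^{1-δ}`. -/
theorem modulation_max_at_min_frequency_case1
    (α β μ m r δ : ℝ) (hα : 0 < α) (hβ : 0 < β) (hr : 0 < r) (hrm : r < m) (hδ : 0 < δ)
    (lam : ℤ → ℝ)
    (hlam : ∀ k : ℤ, lam k =
      -β * (k : ℝ) * |(k : ℝ)| ^ (2 * m) + α * (k : ℝ) * |(k : ℝ)| ^ (2 * r) - 2 * μ * (k : ℝ)) :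
    ∃ c > 0, ∃ K : ℕ, ∀ (k : Fin 3 → ℤ) (τ : Fin 3 → ℝ),
      (∀ j, k j ≠ 0) → (∑ j, τ j) = 0 → (∑ j, k j) = 0 →
      (K : ℤ) ≤ max |k 0| (max |k 1| |k 2|) →
      ∀ j₀ : Fin 3,
        (∀ j, modw lam δ (k j) (τ j) ≤ modw lam δ (k j₀) (τ j₀)) →
        (∀ j, jbr ((k j₀ : ℤ) : ℝ) ≤ jbr ((k j : ℤ) : ℝ)) →
        (∀ j, j ≠ j₀ → modw lam δ (k j) (τ j) ≤
          modw lam δ (k j₀) (τ j₀) *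
            (min (jbr ((k 0 : ℤ) : ℝ)) (min (jbr ((k 1 : ℤ) : ℝ)) (jbr ((k 2 : ℤ) : ℝ))) /
              max (jbr ((k 0 : ℤ) : ℝ)) (max (jbr ((k 1 : ℤ) : ℝ)) (jbr ((k 2 : ℤ) : ℝ)))) ^ δ) →
        c * max (jbr ((k 0 : ℤ) : ℝ)) (max (jbr ((k 1 : ℤ) : ℝ)) (jbr ((k 2 : ℤ) : ℝ))) ^ (2 * m)
            * min (jbr ((k 0 : ℤ) : ℝ)) (min (jbr ((k 1 : ℤ) : ℝ)) (jbr ((k 2 : ℤ) : ℝ))) ^ (1 - δ)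
          ≤ modw lam δ (k j₀) (τ j₀) := by

  have hm : 0 < m := lt_trans hr hrm
  -- the half-coefficient
  set c₀ : ℝ := β * (2*m) * (2:ℝ)^(-(2*m)) / 2 with hc₀def
  have hc₀ : 0 < c₀ := by
    have : (0:ℝ) < (2:ℝ)^(-(2*m)) := Real.rpow_pos_of_pos (by norm_num) _
    positivity
  obtain ⟨K, hK1, hKprop⟩ := exists_K (α*(1+2*r)/c₀) (2*m - 2*r)
    (by positivity) (by linarith)
  set c : ℝ := c₀ / (3 * (2:ℝ)^m * Real.sqrt 2) with hcdef
  have h2m : (0:ℝ) < (2:ℝ)^m := Real.rpow_pos_of_pos (by norm_num) _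
  have hs2 : (0:ℝ) < Real.sqrt 2 := Real.sqrt_pos.mpr (by norm_num)
  have hcpos : 0 < c := by positivity
  refine ⟨c, hcpos, K, ?_⟩
  intro k τ hk0 hτsum hksum hKA j₀ hmaxM hminj hsmall
  rw [Fin.sum_univ_three] at hτsum hksum
  obtain ⟨x, y, hy1, hyx, hxyA, hymin, ε, hε, hF⟩ :=
    struct (k 0) (k 1) (k 2) (hk0 0) (hk0 1) (hk0 2) hksum
  set X : ℝ := ((x:ℤ):ℝ) with hXdef
  set Y : ℝ := ((y:ℤ):ℝ) with hYdef
  have hY1 : (1:ℝ) ≤ Y := by rw [hYdef]; exact_mod_cast hy1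
  have hYX : Y ≤ X := by rw [hXdef, hYdef]; exact_mod_cast hyx
  have hYpos : (0:ℝ) < Y := by linarith
  have hXpos : (0:ℝ) < X := by linarith
  have hApos : (0:ℝ) < X + Y := by linarith
  have hAeq : ((max |k 0| (max |k 1| |k 2|) : ℤ) : ℝ) = X + Y := by
    rw [← hxyA]; push_cast; ring
  have hAK : (K:ℝ) ≤ X + Y := by
    rw [← hAeq]; exact_mod_cast hKA
  -- notation for the three bracket quantities
  set N0 : ℝ := jbr ((k 0 : ℤ) : ℝ) with hN0
  set N1 : ℝ := jbr ((k 1 : ℤ) : ℝ) with hN1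
  set N2 : ℝ := jbr ((k 2 : ℤ) : ℝ) with hN2
  set Nmax : ℝ := max N0 (max N1 N2) with hNmaxdef
  set Nmin : ℝ := min N0 (min N1 N2) with hNmindef
  have hNj : ∀ j : Fin 3, jbr ((k j : ℤ) : ℝ) ≤ Nmax ∧ Nmin ≤ jbr ((k j : ℤ) : ℝ) := by
    intro j
    fin_cases j
    · exact ⟨le_max_left _ _, min_le_left _ _⟩
    · exact ⟨le_trans (le_max_left _ _) (le_max_right _ _),
        le_trans (min_le_right _ _) (min_le_left _ _)⟩
    · exact ⟨le_trans (le_max_right _ _) (le_max_right _ _),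
        le_trans (min_le_right _ _) (min_le_right _ _)⟩
  have hNminpos : 0 < Nmin := lt_min (jbr_pos _) (lt_min (jbr_pos _) (jbr_pos _))
  have hNmaxpos : 0 < Nmax := lt_of_lt_of_le hNminpos
    (le_trans (min_le_left _ _) (le_max_left _ _))
  have hNminj₀ : Nmin = jbr ((k j₀ : ℤ) : ℝ) :=
    le_antisymm (hNj j₀).2 (le_min (hminj 0) (le_min (hminj 1) (hminj 2)))
  set M₀ : ℝ := modw lam δ (k j₀) (τ j₀) with hM₀def
  have hM₀nonneg : 0 ≤ M₀ := modw_nonneg _ _ _ _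
  -- Step 1: each |τ j - lam (k j)| ≤ M₀ * Nmin ^ δ
  have hstep1 : ∀ j : Fin 3, |τ j - lam (k j)| ≤ M₀ * Nmin ^ δ := by
    intro j
    by_cases hj : j = j₀
    · subst hj
      calc |τ j - lam (k j)| ≤ modw lam δ (k j) (τ j) * jbr ((k j : ℤ) : ℝ) ^ δ :=
            modw_ge lam _ _
        _ = M₀ * Nmin ^ δ := by rw [hNminj₀]
    · have h1 : |τ j - lam (k j)| ≤ modw lam δ (k j) (τ j) * jbr ((k j : ℤ) : ℝ) ^ δ :=
        modw_ge lam _ _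
      have h2 : modw lam δ (k j) (τ j) * jbr ((k j : ℤ) : ℝ) ^ δ ≤
          (M₀ * (Nmin / Nmax) ^ δ) * Nmax ^ δ := by
        apply mul_le_mul (hsmall j hj)
          (Real.rpow_le_rpow (jbr_pos _).le (hNj j).1 hδ.le)
          (Real.rpow_nonneg (jbr_pos _).le _)
        positivity
      have h3 : (M₀ * (Nmin / Nmax) ^ δ) * Nmax ^ δ = M₀ * Nmin ^ δ := by
        rw [mul_assoc, ← Real.mul_rpow (by positivity) hNmaxpos.le,
          div_mul_cancel₀ _ hNmaxpos.ne']
      linarith [h1, h2, h3.le]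
  -- Step 2: |lam (k 0) + lam (k 1) + lam (k 2)| ≤ 3 * M₀ * Nmin ^ δ
  have hstep2 : |lam (k 0) + lam (k 1) + lam (k 2)| ≤ 3 * (M₀ * Nmin ^ δ) := by
    have he : lam (k 0) + lam (k 1) + lam (k 2) =
        -((τ 0 - lam (k 0)) + (τ 1 - lam (k 1)) + (τ 2 - lam (k 2))) := by linarith
    rw [he, abs_neg]
    calc |(τ 0 - lam (k 0)) + (τ 1 - lam (k 1)) + (τ 2 - lam (k 2))|
        ≤ |(τ 0 - lam (k 0)) + (τ 1 - lam (k 1))| + |τ 2 - lam (k 2)| := abs_add_le _ _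
      _ ≤ |τ 0 - lam (k 0)| + |τ 1 - lam (k 1)| + |τ 2 - lam (k 2)| := by
          linarith [abs_add_le (τ 0 - lam (k 0)) (τ 1 - lam (k 1))]
      _ ≤ 3 * (M₀ * Nmin ^ δ) := by linarith [hstep1 0, hstep1 1, hstep1 2]
  -- Step 3: lower bound the resonance
  have hΛ : lam (k 0) + lam (k 1) + lam (k 2) =
      ε * (-β * PhiR (2*m) X Y + α * PhiR (2*r) X Y) := by
    have e1 := hF (2*m)
    have e2 := hF (2*r)
    simp only [FR] at e1 e2
    have hc0 : ((k 0 : ℤ):ℝ) + ((k 1 : ℤ):ℝ) + ((k 2 : ℤ):ℝ) = 0 := by exact_mod_cast hksum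
    rw [hlam (k 0), hlam (k 1), hlam (k 2)]
    linear_combination (-β) * e1 + α * e2 - 2*μ*hc0
  have hl := Phi_lower (by linarith : (0:ℝ) ≤ 2*m) hYpos hYX
  have hu := Phi_upper (by linarith : (0:ℝ) ≤ 2*r) hYpos hYX
  have hXA : (X+Y)/2 ≤ X := by linarith
  have hXp : ((X+Y)/2)^(2*m) ≤ X^(2*m) :=
    Real.rpow_le_rpow (by positivity) hXA (by linarith)
  have hhalf : ((X+Y)/2)^(2*m) = (X+Y)^(2*m) * (2:ℝ)^(-(2*m)) := by
    rw [Real.div_rpow hApos.le (by norm_num), Real.rpow_neg (by norm_num)]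
    ring
  have hXp' : (X+Y)^(2*m) * (2:ℝ)^(-(2*m)) ≤ X^(2*m) := hhalf ▸ hXp
  have hKA' : α*(1+2*r) ≤ c₀ * (X+Y)^(2*m-2*r) := by
    have := hKprop (X+Y) hAK
    rw [div_le_iff₀ hc₀] at this
    linarith
  have hsplit : (X+Y)^(2*m) = (X+Y)^(2*m-2*r) * (X+Y)^(2*r) := by
    rw [← Real.rpow_add hApos]; ring_nf
  have m1 : β * ((2*m) * X^(2*m) * Y) ≤ β * PhiR (2*m) X Y :=
    mul_le_mul_of_nonneg_left hl hβ.le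
  have m2 : α * PhiR (2*r) X Y ≤ α * ((1+2*r)*(X+Y)^(2*r)*Y) :=
    mul_le_mul_of_nonneg_left hu hα.le
  have m3 : 2*c₀*((X+Y)^(2*m)) * Y ≤ β * ((2*m) * X^(2*m) * Y) := by
    have h := mul_le_mul_of_nonneg_left hXp' (show (0:ℝ) ≤ β*(2*m)*Y by positivity)
    rw [hc₀def]
    linarith [h]
  have m4 : α * ((1+2*r)*(X+Y)^(2*r)*Y) ≤ c₀*((X+Y)^(2*m)) * Y := by
    rw [hsplit]
    linarith [mul_le_mul_of_nonneg_right hKA'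
      (show (0:ℝ) ≤ (X+Y)^(2*r)*Y by positivity)]
  have hSlow : c₀*((X+Y)^(2*m)) * Y ≤ β * PhiR (2*m) X Y - α * PhiR (2*r) X Y := by
    linarith
  have habs : β * PhiR (2*m) X Y - α * PhiR (2*r) X Y ≤
      |lam (k 0) + lam (k 1) + lam (k 2)| := by
    rw [hΛ]
    rcases hε with h | h <;> subst h
    · rw [one_mul]
      linarith [neg_le_abs (-β * PhiR (2*m) X Y + α * PhiR (2*r) X Y)]
    · rw [neg_one_mul, abs_neg]
      linarith [neg_le_abs (-β * PhiR (2*m) X Y + α * PhiR (2*r) X Y)]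
  -- Step 4: compare Nmax, Nmin with X+Y, Y
  have hNmaxA : Nmax ≤ Real.sqrt 2 * (X+Y) := by
    have hj : ∀ j : Fin 3, jbr ((k j : ℤ) : ℝ) ≤ Real.sqrt 2 * (X+Y) := by
      intro j
      have h1 : (1:ℝ) ≤ |((k j : ℤ) : ℝ)| := by
        have h0 : (1:ℤ) ≤ |k j| := Int.one_le_abs (by exact_mod_cast hk0 j)
        calc (1:ℝ) ≤ ((|k j| : ℤ) : ℝ) := by exact_mod_cast h0
          _ = |((k j : ℤ) : ℝ)| := by push_cast; rfl
      have h2 : |((k j : ℤ) : ℝ)| ≤ X + Y := by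
        rw [← hAeq]
        have h0 : |k j| ≤ max |k 0| (max |k 1| |k 2|) := by
          fin_cases j
          · exact le_max_left _ _
          · exact le_trans (le_max_left _ _) (le_max_right _ _)
          · exact le_trans (le_max_right _ _) (le_max_right _ _)
        calc |((k j : ℤ) : ℝ)| = ((|k j| : ℤ) : ℝ) := by push_cast; rfl
          _ ≤ _ := by exact_mod_cast h0
      calc jbr ((k j : ℤ) : ℝ) ≤ Real.sqrt 2 * |((k j : ℤ) : ℝ)| := jbr_le_sqrt2 h1
        _ ≤ Real.sqrt 2 * (X+Y) := mul_le_mul_of_nonneg_left h2 hs2.le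
    exact max_le (hj 0) (max_le (hj 1) (hj 2))
  have hNminY : Nmin ≤ Real.sqrt 2 * Y := by
    have hex : y = |k 0| ∨ y = |k 1| ∨ y = |k 2| := by omega
    have key : ∀ j : Fin 3, y = |k j| → Nmin ≤ Real.sqrt 2 * Y := by
      intro j hjy
      have h1 : (1:ℝ) ≤ |((k j : ℤ) : ℝ)| := by
        have h0 : (1:ℤ) ≤ |k j| := Int.one_le_abs (by exact_mod_cast hk0 j)
        calc (1:ℝ) ≤ ((|k j| : ℤ) : ℝ) := by exact_mod_cast h0
          _ = |((k j : ℤ) : ℝ)| := by push_cast; rfl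
      have h2 : |((k j : ℤ) : ℝ)| = Y := by
        rw [hYdef, hjy]; push_cast; rfl
      calc Nmin ≤ jbr ((k j : ℤ) : ℝ) := (hNj j).2
        _ ≤ Real.sqrt 2 * |((k j : ℤ) : ℝ)| := jbr_le_sqrt2 h1
        _ = Real.sqrt 2 * Y := by rw [h2]
    rcases hex with h | h | h
    · exact key 0 h
    · exact key 1 h
    · exact key 2 h
  -- Step 5: conclude
  have hrpow1 : Nmin ^ (1-δ) * Nmin ^ δ = Nmin := by
    rw [← Real.rpow_add hNminpos]
    norm_num
  have hNmaxp : Nmax ^ (2*m) ≤ (2:ℝ)^m * (X+Y)^(2*m) := by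
    calc Nmax ^ (2*m) ≤ (Real.sqrt 2 * (X+Y)) ^ (2*m) :=
          Real.rpow_le_rpow hNmaxpos.le hNmaxA (by linarith)
      _ = (Real.sqrt 2) ^ (2*m) * (X+Y)^(2*m) :=
          Real.mul_rpow hs2.le hApos.le
      _ = (2:ℝ)^m * (X+Y)^(2*m) := by
          have hsq : (Real.sqrt 2) ^ (2*m) = (2:ℝ)^m := by
            rw [Real.sqrt_eq_rpow, ← Real.rpow_mul (by norm_num : (0:ℝ) ≤ 2),
              show (1/(2:ℝ)) * (2*m) = m by ring]
          rw [hsq]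
  have hfinal : c * Nmax ^ (2*m) * Nmin ^ (1-δ) * (3 * Nmin ^ δ) ≤
      M₀ * (3 * Nmin ^ δ) := by
    have lhs_eq : c * Nmax ^ (2*m) * Nmin ^ (1-δ) * (3 * Nmin ^ δ) =
        3 * c * Nmax ^ (2*m) * Nmin := by
      rw [show c * Nmax ^ (2*m) * Nmin ^ (1-δ) * (3 * Nmin ^ δ) =
        3 * c * Nmax ^ (2*m) * (Nmin ^ (1-δ) * Nmin ^ δ) by ring, hrpow1]
    rw [lhs_eq]
    have h1 : 3 * c * Nmax ^ (2*m) * Nmin ≤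
        3 * c * ((2:ℝ)^m * (X+Y)^(2*m)) * (Real.sqrt 2 * Y) := by
      have hc3 : 0 ≤ 3 * c := by positivity
      have hmm := mul_le_mul_of_nonneg_left (mul_le_mul hNmaxp hNminY hNminpos.le
        (by positivity : (0:ℝ) ≤ (2:ℝ)^m * (X+Y)^(2*m))) hc3
      linarith [hmm]
    have h2 : 3 * c * ((2:ℝ)^m * (X+Y)^(2*m)) * (Real.sqrt 2 * Y) =
        c₀ * ((X+Y)^(2*m)) * Y := by
      rw [hcdef]
      field_simp
    have h3 : c₀ * ((X+Y)^(2*m)) * Y ≤ M₀ * (3 * Nmin ^ δ) := by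
      calc c₀ * ((X+Y)^(2*m)) * Y ≤ β * PhiR (2*m) X Y - α * PhiR (2*r) X Y := hSlow
        _ ≤ |lam (k 0) + lam (k 1) + lam (k 2)| := habs
        _ ≤ 3 * (M₀ * Nmin ^ δ) := hstep2
        _ = M₀ * (3 * Nmin ^ δ) := by ring
    linarith [h1, h2.le, h3]
  have h3pos : 0 < 3 * Nmin ^ δ := by positivity
  exact le_of_mul_le_mul_right hfinal h3pos
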